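/- Let k be a field, m ≥ 1 an integer, and e_1, …, e_m ≥ 1 integers. Let A = k[x_1, …, x_m]/(x_1^{e_1}, …, x_m^{e_m}) be the truncated polynomial algebra and let ε : A → k be the k-algebra homomorphism with ε(x_j) = 0 for all j. Then the left annihilator of the augmentation ideal, {a ∈ A : a·b = 0 for all b ∈ ker ε}, is exactly the one-dimensional k-subspace spanned by the product π = x_1^{e_1−1} · x_2^{e_2−1} ⋯ x_m^{e_m−1}. -/

import Mathlib

/-!
Let `k` be a field, `m ≥ 1`, and `e : Fin m → ℕ` with `e j ≥ 1`.  Let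
`A = k[x_1,…,x_m]/(x_1^{e 1}, …, x_m^{e m})` be the truncated polynomial algebra and
`ε : A → k` the `k`-algebra homomorphism with `ε (x j) = 0`.

STATEMENT 11: the left annihilator of the augmentation ideal,
`{a : A | a * b = 0 for all b ∈ ker ε}`, is exactly the one-dimensional `k`-subspace
spanned by `π = x_1^{e 1 - 1} ⋯ x_m^{e m - 1}` (in particular `π ≠ 0`).
-/

open MvPolynomial

noncomputable section

variable (k : Type*) [Field k] (m : ℕ) (e : Fin m → ℕ)

/-- The ideal `(x_1^{e 1}, …, x_m^{e m})` of truncating relations. -/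
def truncIdeal : Ideal (MvPolynomial (Fin m) k) :=
  Ideal.span (Set.range fun j : Fin m => (X j : MvPolynomial (Fin m) k) ^ e j)

/-- The truncated polynomial algebra `A = k[x_1,…,x_m]/(x_1^{e 1}, …, x_m^{e m})`. -/
abbrev TruncAlg := MvPolynomial (Fin m) k ⧸ truncIdeal k m e

/-- The augmentation `ε : A → k`, the `k`-algebra map sending each generator `x j` to `0`;
it is induced by evaluation of polynomials at `0`. -/
def truncAug (he : ∀ j, 1 ≤ e j) : TruncAlg k m e →ₐ[k] k :=
  Ideal.Quotient.liftₐ (truncIdeal k m e) (aeval 0) (by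
    intro a ha
    have h : truncIdeal k m e ≤ RingHom.ker (aeval (0 : Fin m → k)).toRingHom := by
      rw [truncIdeal, Ideal.span_le]
      rintro _ ⟨j, rfl⟩
      have : (0 : k) ^ e j = 0 := zero_pow (Nat.one_le_iff_ne_zero.mp (he j))
      simp [RingHom.mem_ker, this]
    exact h ha)

/-- The class `π` of the product `x_1^{e 1 - 1} ⋯ x_m^{e m - 1}` in `A`. -/
def truncTop : TruncAlg k m e :=
  Ideal.Quotient.mkₐ k (truncIdeal k m e) (∏ j : Fin m, X j ^ (e j - 1))

/-- The exponent multidegree of the top monomial. -/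
def topExp : Fin m →₀ ℕ := ∑ j : Fin m, Finsupp.single j (e j - 1)

lemma topExp_apply (i : Fin m) : topExp m e i = e i - 1 := by
  classical
  rw [topExp, Finsupp.finset_sum_apply, Finset.sum_eq_single i]
  · simp
  · intro j _ hj; simp [Finsupp.single_apply, hj]
  · simp

lemma prod_eq_monomial :
    (∏ j : Fin m, (X j : MvPolynomial (Fin m) k) ^ (e j - 1)) = monomial (topExp m e) (1 : k) :=
  calc ∏ j : Fin m, (X j : MvPolynomial (Fin m) k) ^ (e j - 1)
      = ∏ j : Fin m, (X j : MvPolynomial (Fin m) k) ^ (topExp m e j) :=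
        Finset.prod_congr rfl fun j _ => by rw [topExp_apply]
    _ = ∏ j ∈ (topExp m e).support, (X j : MvPolynomial (Fin m) k) ^ (topExp m e j) :=
        (Finset.prod_subset (Finset.subset_univ _) fun x _ hx => by
          rw [Finsupp.notMem_support_iff] at hx
          rw [hx, pow_zero]).symm
    _ = monomial (topExp m e) (1 : k) := prod_X_pow_eq_monomial

lemma mem_truncIdeal_iff (p : MvPolynomial (Fin m) k) :
    p ∈ truncIdeal k m e ↔ ∀ d ∈ p.support, ∃ j, e j ≤ d j := by
  classical
  have h : truncIdeal k m e =
      Ideal.span ((fun s => monomial s (1 : k)) ''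
        Set.range fun j : Fin m => Finsupp.single j (e j)) := by
    rw [truncIdeal, ← Set.range_comp]
    congr 1
    ext q
    simp [Function.comp, X_pow_eq_monomial]
  rw [h, mem_ideal_span_monomial_image]
  simp [Finsupp.single_le_iff]

lemma truncAug_mk (he : ∀ j, 1 ≤ e j) (p : MvPolynomial (Fin m) k) :
    truncAug k m e he (Ideal.Quotient.mkₐ k (truncIdeal k m e) p) = coeff 0 p := by
  rw [truncAug, Ideal.Quotient.mkₐ_eq_mk]
  show (aeval (fun _ => (0 : k))) p = _
  rw [aeval_zero']
  rfl

theorem statement11 (hm : 1 ≤ m) (he : ∀ j, 1 ≤ e j) :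
    truncTop k m e ≠ 0 ∧
      {a : TruncAlg k m e | ∀ b : TruncAlg k m e, truncAug k m e he b = 0 → a * b = 0} =
        (Submodule.span k {truncTop k m e} : Submodule k (TruncAlg k m e)) := by
  classical
  have hD0 : ∀ i, topExp m e i = e i - 1 := topExp_apply m e
  have hTop : truncTop k m e =
      Ideal.Quotient.mkₐ k (truncIdeal k m e) (monomial (topExp m e) (1 : k)) := by
    rw [truncTop, prod_eq_monomial]
  -- π ≠ 0
  have hne : truncTop k m e ≠ 0 := by
    rw [hTop]
    intro h
    rw [Ideal.Quotient.mkₐ_eq_mk, Ideal.Quotient.eq_zero_iff_mem, mem_truncIdeal_iff] at h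
    obtain ⟨j, hj⟩ := h (topExp m e) (by simp [mem_support_iff, coeff_monomial])
    rw [hD0 j] at hj
    have := he j
    omega
  -- span ⊆ annihilator : π kills everything in ker ε
  have hmul : ∀ b : TruncAlg k m e, truncAug k m e he b = 0 → truncTop k m e * b = 0 := by
    intro b hb
    obtain ⟨p, rfl⟩ := Ideal.Quotient.mkₐ_surjective k (truncIdeal k m e) b
    have hc : coeff 0 p = 0 := by rwa [truncAug_mk] at hb
    rw [hTop, ← map_mul, Ideal.Quotient.mkₐ_eq_mk, Ideal.Quotient.eq_zero_iff_mem,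
      mem_truncIdeal_iff]
    intro u hu
    rw [mem_support_iff, coeff_monomial_mul'] at hu
    by_cases hle : topExp m e ≤ u
    · rw [if_pos hle, one_mul] at hu
      have hsub : u - topExp m e ≠ 0 := by
        intro h0
        apply hu
        rw [h0, hc]
      obtain ⟨j, hj⟩ := Finsupp.ne_iff.mp hsub
      refine ⟨j, ?_⟩
      have h1 : topExp m e j ≤ u j := hle j
      have h2 : (u - topExp m e) j = u j - topExp m e j := Finsupp.tsub_apply _ _ _
      have h3 : (0 : Fin m →₀ ℕ) j = 0 := rfl
      rw [h2, h3] at hj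
      have := he j
      have := hD0 j
      omega
    · rw [if_neg hle] at hu
      exact absurd rfl hu
  refine ⟨hne, ?_⟩
  ext a
  simp only [Set.mem_setOf_eq, SetLike.mem_coe]
  constructor
  · -- annihilator ⊆ span
    intro ha
    obtain ⟨p, rfl⟩ := Ideal.Quotient.mkₐ_surjective k (truncIdeal k m e) a
    have hXj : ∀ j : Fin m, p * X j ∈ truncIdeal k m e := by
      intro j
      have hεX : truncAug k m e he (Ideal.Quotient.mkₐ k (truncIdeal k m e) (X j)) = 0 := by
        rw [truncAug_mk]; simp
      have h := ha _ hεX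
      rwa [← map_mul, Ideal.Quotient.mkₐ_eq_mk, Ideal.Quotient.eq_zero_iff_mem] at h
    have claim : ∀ d ∈ p.support, (∀ j, d j < e j) → d = topExp m e := by
      intro d hd hlt
      ext i
      have h1 : coeff (d + Finsupp.single i 1) (p * X i) ≠ 0 := by
        rw [coeff_mul_X]; exact mem_support_iff.mp hd
      obtain ⟨j, hj⟩ := (mem_truncIdeal_iff k m e _).mp (hXj i) _ (mem_support_iff.mpr h1)
      rw [Finsupp.add_apply, Finsupp.single_apply] at hj
      by_cases hji : i = j
      · rw [if_pos hji] at hj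
        subst hji
        have h2 := hlt i
        rw [hD0 i]
        omega
      · rw [if_neg hji, add_zero] at hj
        exact absurd hj (not_le.mpr (hlt j))
    have hdiff : p - coeff (topExp m e) p • monomial (topExp m e) (1 : k) ∈ truncIdeal k m e := by
      rw [mem_truncIdeal_iff]
      intro u hu
      rw [mem_support_iff] at hu
      by_cases hu0 : u = topExp m e
      · exfalso
        apply hu
        subst hu0
        simp [coeff_smul, coeff_monomial]
      · have hup : u ∈ p.support := by
          rw [mem_support_iff]
          intro h
          apply hu
          rw [coeff_sub, coeff_smul, coeff_monomial, if_neg (Ne.symm hu0), h]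
          simp
        by_contra hno
        push_neg at hno
        exact hu0 (claim u hup hno)
    rw [Submodule.mem_span_singleton]
    refine ⟨coeff (topExp m e) p, ?_⟩
    rw [hTop, ← map_smul, Ideal.Quotient.mkₐ_eq_mk, Ideal.Quotient.eq]
    simpa using neg_mem hdiff
  · intro ha b hb
    obtain ⟨c, rfl⟩ := Submodule.mem_span_singleton.mp ha
    rw [smul_mul_assoc, hmul b hb, smul_zero]
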